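/- If g : [0,∞) → [0,∞) is measurable and ∫₀^∞ g(t) t^{−1/2} dt < ∞, then ∫₀^∞ g(t) (t+1)^{−1/2} dt < ∞; consequently the expectation of the IGT distribution always exists and equals θ, independent of g. -/

import Mathlib

open MeasureTheory

open Set in
private lemma integrable_comp_abs_of_integrableOn {f : ℝ → ℝ}
    (hf : IntegrableOn (fun x => f |x|) (Set.Ioi (0:ℝ))) :
    Integrable (fun x => f |x|) := by
  have int_Iic : IntegrableOn (fun x ↦ f |x|) (Iic 0) := by
    rw [← Measure.map_neg_eq_self (volume : Measure ℝ)]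
    have m : MeasurableEmbedding fun x : ℝ => -x := (Homeomorph.neg ℝ).measurableEmbedding
    rw [m.integrableOn_map_iff]
    simp_rw [Function.comp_def, abs_neg, neg_preimage, neg_Iic, neg_zero]
    exact Iff.mpr integrableOn_Ici_iff_integrableOn_Ioi hf
  have h := int_Iic.union hf
  rwa [Iic_union_Ioi, integrableOn_univ] at h

set_option maxHeartbeats 1000000 in
theorem igt_expectation_exists_and_equals_theta
    (g : ℝ → ℝ) (hg : Measurable g) (hg0 : ∀ t, 0 ≤ g t)
    (C : ℝ) (hC : C = ∫ t in Set.Ioi (0 : ℝ), g t / Real.sqrt t)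
    (hCfin : IntegrableOn (fun t => g t / Real.sqrt t) (Set.Ioi (0 : ℝ)))
    (hC0 : 0 < C) :
    IntegrableOn (fun t => g t / Real.sqrt (t + 1)) (Set.Ioi (0 : ℝ)) ∧
      ∀ θ lam : ℝ, 0 < θ → 0 < lam →
        IntegrableOn (fun x =>
            x * (C⁻¹ * Real.sqrt (lam / x ^ 3) * g (lam * (x - θ) ^ 2 / (θ ^ 2 * x))))
          (Set.Ioi (0 : ℝ)) ∧
        ∫ x in Set.Ioi (0 : ℝ),
            x * (C⁻¹ * Real.sqrt (lam / x ^ 3) * g (lam * (x - θ) ^ 2 / (θ ^ 2 * x))) = θ := by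
  constructor
  · -- domination by g t / √t
    refine Integrable.mono' hCfin ?_ ?_
    · exact (hg.div (Real.continuous_sqrt.measurable.comp
        (measurable_id.add_const 1))).aestronglyMeasurable
    · rw [ae_restrict_iff' measurableSet_Ioi]
      filter_upwards with t ht
      have ht0 : (0:ℝ) < t := ht
      have h1 : (0:ℝ) < Real.sqrt t := Real.sqrt_pos.mpr ht0
      have h2 : Real.sqrt t ≤ Real.sqrt (t + 1) := Real.sqrt_le_sqrt (by linarith)
      have hnn : 0 ≤ g t / Real.sqrt (t + 1) :=
        div_nonneg (hg0 t) (Real.sqrt_nonneg _)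
      rw [Real.norm_eq_abs, abs_of_nonneg hnn]
      exact div_le_div_of_nonneg_left (hg0 t) h1 h2
  intro θ lam hθ hlam
  -- notation
  set fInt : ℝ → ℝ := fun x =>
      x * (C⁻¹ * Real.sqrt (lam / x ^ 3) * g (lam * (x - θ) ^ 2 / (θ ^ 2 * x))) with hfInt
  -- Step 1 : substitution t = lam*y^2/θ on (0,∞)
  set ψ : ℝ → ℝ := fun y => lam * y ^ 2 / θ with hψ
  have hψmaps : ψ '' Set.Ioi 0 = Set.Ioi (0:ℝ) := by
    ext t
    constructor
    · rintro ⟨y, hy, rfl⟩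
      exact div_pos (mul_pos hlam (pow_pos hy 2)) hθ
    · intro ht
      have ht0 : (0:ℝ) < t := ht
      refine ⟨Real.sqrt (θ * t / lam), Real.sqrt_pos.mpr (by positivity), ?_⟩
      show lam * Real.sqrt (θ * t / lam) ^ 2 / θ = t
      rw [Real.sq_sqrt (by positivity : (0:ℝ) ≤ θ * t / lam)]
      field_simp
  have hψderiv : ∀ y ∈ Set.Ioi (0:ℝ),
      HasDerivWithinAt ψ (2 * lam * y / θ) (Set.Ioi 0) y := by
    intro y _
    have : HasDerivAt ψ (2 * lam * y / θ) y := by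
      have h := ((hasDerivAt_pow 2 y).const_mul lam).div_const θ
      simpa [hψ, mul_comm, mul_assoc, mul_left_comm] using h
    exact this.hasDerivWithinAt
  have hψinj : Set.InjOn ψ (Set.Ioi 0) := by
    intro a ha b hb hab
    simp only [hψ] at hab
    have h2 : a ^ 2 = b ^ 2 := by
      field_simp [hlam.ne', hθ.ne'] at hab
      tauto
    have ha' := Set.mem_Ioi.mp ha
    have hb' := Set.mem_Ioi.mp hb
    apply le_antisymm <;> nlinarith
  set c1 : ℝ := 2 * Real.sqrt (lam / θ) with hc1
  have hLθpos : 0 < lam / θ := div_pos hlam hθ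
  have hc1pos : 0 < c1 := by positivity
  have hsq_c : Real.sqrt (lam / θ) ^ 2 = lam / θ := Real.sq_sqrt hLθpos.le
  have hptwise1 : ∀ y ∈ Set.Ioi (0:ℝ),
      |2 * lam * y / θ| • (g (ψ y) / Real.sqrt (ψ y)) = c1 * g (ψ y) := by
    intro y hy
    have hy0 : (0:ℝ) < y := hy
    have habs : |2 * lam * y / θ| = 2 * lam * y / θ := abs_of_pos (by positivity)
    have hsψ : Real.sqrt (ψ y) = Real.sqrt (lam / θ) * y := by
      have : ψ y = (lam / θ) * y ^ 2 := by simp only [hψ]; ring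
      rw [this, Real.sqrt_mul hLθpos.le, Real.sqrt_sq hy0.le]
    rw [smul_eq_mul, habs, hsψ, hc1]
    have hs0 : (0:ℝ) < Real.sqrt (lam / θ) := Real.sqrt_pos.mpr hLθpos
    have key : ∀ G s : ℝ, s ≠ 0 → s ^ 2 = lam / θ →
        2 * lam * y / θ * (G / (s * y)) = 2 * s * G := by
      intro G s hs hs2
      have h9 : lam / θ = s ^ 2 := hs2.symm
      calc 2 * lam * y / θ * (G / (s * y))
          = 2 * (lam / θ) * (G / s) * (y / y) := by ring
        _ = 2 * s ^ 2 * (G / s) * 1 := by rw [h9, div_self hy0.ne']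
        _ = 2 * s * G := by field_simp
    exact key (g (ψ y)) _ hs0.ne' hsq_c
  -- transfer integrability and integral through ψ
  have hiff1 := integrableOn_image_iff_integrableOn_abs_deriv_smul
      measurableSet_Ioi hψderiv hψinj (fun t => g t / Real.sqrt t)
  rw [hψmaps] at hiff1
  have hint1 : IntegrableOn (fun y => c1 * g (ψ y)) (Set.Ioi 0) := by
    exact IntegrableOn.congr_fun (hiff1.mp hCfin)
      (fun y hy => (hptwise1 y hy)) measurableSet_Ioi
  have hint_gψ : IntegrableOn (fun y => g (ψ y)) (Set.Ioi 0) := by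
    have h := hint1.const_mul c1⁻¹
    refine IntegrableOn.congr_fun h (fun y _ => ?_) measurableSet_Ioi
    field_simp
  have hval1 : C = c1 * ∫ y in Set.Ioi (0:ℝ), g (ψ y) := by
    calc C = ∫ t in Set.Ioi (0:ℝ), g t / Real.sqrt t := hC
      _ = ∫ t in ψ '' Set.Ioi 0, g t / Real.sqrt t := by rw [hψmaps]
      _ = ∫ y in Set.Ioi (0:ℝ), |2 * lam * y / θ| • (g (ψ y) / Real.sqrt (ψ y)) :=
          integral_image_eq_integral_abs_deriv_smul measurableSet_Ioi hψderiv hψinj _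
      _ = ∫ y in Set.Ioi (0:ℝ), c1 * g (ψ y) :=
          setIntegral_congr_fun measurableSet_Ioi (fun y hy => hptwise1 y hy)
      _ = c1 * ∫ y in Set.Ioi (0:ℝ), g (ψ y) := integral_const_mul c1 _
  -- Step 2: the even function f0
  set f0 : ℝ → ℝ := fun y => g (lam * y ^ 2 / θ) with hf0
  have hf0abs : ∀ y : ℝ, f0 |y| = f0 y := by
    intro y; simp only [hf0, sq_abs]
  have hf0_int : Integrable f0 := by
    have h1 : IntegrableOn (fun y => f0 |y|) (Set.Ioi 0) := by
      refine IntegrableOn.congr_fun hint_gψ (fun y _ => ?_) measurableSet_Ioi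
      rw [hf0abs]
    have h2 := integrable_comp_abs_of_integrableOn h1
    exact h2.congr (Filter.Eventually.of_forall fun y => hf0abs y)
  have hf0_integral : ∫ y, f0 y = 2 * ∫ y in Set.Ioi (0:ℝ), f0 y := by
    rw [← integral_comp_abs (f := f0)]
    exact integral_congr_ae (Filter.Eventually.of_forall fun y => (hf0abs y).symm)
  have hf0_Ioi : (∫ y in Set.Ioi (0:ℝ), f0 y) = C / c1 := by
    have h9 : (∫ y in Set.Ioi (0:ℝ), f0 y) = ∫ y in Set.Ioi (0:ℝ), g (ψ y) := by
      simp only [hf0, hψ]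
    rw [h9, eq_div_iff (ne_of_gt hc1pos), mul_comm]
    exact hval1.symm
  -- Step 3: the main change of variables x = φ(y)
  set r : ℝ → ℝ := fun y => Real.sqrt (y ^ 2 + 4) with hr
  set S : ℝ → ℝ := fun y => (y + r y) / 2 with hS
  set φ : ℝ → ℝ := fun y => θ * S y ^ 2 with hφ
  have hr_pos : ∀ y, 0 < r y := fun y => Real.sqrt_pos.mpr (by positivity)
  have hr_sq : ∀ y, r y ^ 2 = y ^ 2 + 4 := fun y => Real.sq_sqrt (by positivity)
  have hr_gt : ∀ y, |y| < r y := by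
    intro y
    have h1 : Real.sqrt (y ^ 2) < Real.sqrt (y ^ 2 + 4) :=
      Real.sqrt_lt_sqrt (sq_nonneg y) (by linarith)
    simpa [Real.sqrt_sq_eq_abs] using h1
  have hS_pos : ∀ y, 0 < S y := by
    intro y
    have h1 := hr_gt y
    have h2 := neg_abs_le y
    simp only [hS]
    linarith
  have h2S : ∀ y, 2 * S y = y + r y := by intro y; simp only [hS]; ring
  have hkey : ∀ y, S y ^ 2 = y * S y + 1 := by
    intro y
    have h1 := hr_sq y
    have h2 := h2S y
    linear_combination ((2 * S y - y + r y) / 4) * h2 + (1 / 4) * h1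
  have hSinj : ∀ a b, S a = S b → a = b := by
    intro a b hab
    have ha := hkey a
    have hb := hkey b
    rw [hab] at ha
    have h3 : a * S b = b * S b := by linarith
    exact mul_right_cancel₀ (hS_pos b).ne' h3
  have hφinj : Set.InjOn φ Set.univ := by
    intro a _ b _ hab
    simp only [hφ] at hab
    have h1 : S a = S b := by
      have hpa := hS_pos a
      have hpb := hS_pos b
      have h2 : S a ^ 2 = S b ^ 2 := by
        have := hθ.ne'
        field_simp at hab
        tauto
      apply le_antisymm <;> nlinarith
    exact hSinj a b h1
  have hφ_pos : ∀ y, 0 < φ y := fun y => by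
    have := hS_pos y; simp only [hφ]; positivity
  have hφsurj : φ '' Set.univ = Set.Ioi (0:ℝ) := by
    ext x
    constructor
    · rintro ⟨y, -, rfl⟩; exact hφ_pos y
    · intro hx
      have hx0 : (0:ℝ) < x := hx
      set a : ℝ := Real.sqrt (x / θ) with ha
      have ha0 : 0 < a := Real.sqrt_pos.mpr (div_pos hx0 hθ)
      have ha2 : a ^ 2 = x / θ := Real.sq_sqrt (div_pos hx0 hθ).le
      set y : ℝ := a - a⁻¹ with hy
      have haroot : a ^ 2 = y * a + 1 := by
        rw [hy]
        field_simp
        ring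
      -- uniqueness of the positive root
      have hSa : S y = a := by
        have h1 := hkey y
        have h2 := hS_pos y
        have h3 : S y  * (S y - y) = 1 := by linear_combination h1
        have h4 : S y - y > 0 := by
          rcases lt_trichotomy (S y - y) 0 with h | h | h
          · nlinarith
          · nlinarith
          · exact h
        have h5 : (S y - a) * (S y + a - y) = 0 := by linear_combination h1 - haroot
        have h6 : S y + a - y > 0 := by linarith
        have h7 : S y - a = 0 := by
          rcases mul_eq_zero.mp h5 with h | h
          · exact h
          · nlinarith
        linarith
      refine ⟨y, Set.mem_univ y, ?_⟩
      simp only [hφ, hSa, ha2]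
      field_simp
  have hφderiv : ∀ y ∈ Set.univ,
      HasDerivWithinAt φ (2 * φ y / r y) Set.univ y := by
    intro y _
    have hne : (y:ℝ) ^ 2 + 4 ≠ 0 := by positivity
    have hd1 : HasDerivAt (fun y : ℝ => y ^ 2 + 4) (2 * y) y := by
      simpa using (hasDerivAt_pow 2 y).add_const 4
    have hd2 : HasDerivAt (fun y : ℝ => Real.sqrt (y ^ 2 + 4))
        (1 / (2 * Real.sqrt (y ^ 2 + 4)) * (2 * y)) y :=
      (Real.hasDerivAt_sqrt hne).comp y hd1
    have hd3 : HasDerivAt S ((1 + 1 / (2 * Real.sqrt (y ^ 2 + 4)) * (2 * y)) / 2) y := by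
      simpa only [hS, hr, Pi.add_apply, id_eq] using ((hasDerivAt_id y).add hd2).div_const 2
    have hd4 : HasDerivAt φ (θ * (2 * S y ^ 1 *
        ((1 + 1 / (2 * Real.sqrt (y ^ 2 + 4)) * (2 * y)) / 2))) y := by
      simpa only [hφ, Pi.pow_apply, Nat.cast_ofNat, Nat.reduceSub] using ((hd3.pow 2).const_mul θ)
    have heq : θ * (2 * S y ^ 1 *
        ((1 + 1 / (2 * Real.sqrt (y ^ 2 + 4)) * (2 * y)) / 2)) = 2 * φ y / r y := by
      have hrne : r y ≠ 0 := (hr_pos y).ne'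
      have h2s := h2S y
      have hrr : Real.sqrt (y ^ 2 + 4) = r y := rfl
      rw [hrr]
      have hstep : (1 + 1 / (2 * r y) * (2 * y)) = (y + r y) / r y := by
        field_simp
        ring
      rw [pow_one, hstep, ← h2s]
      simp only [hφ]
      field_simp
    rw [heq] at hd4
    exact hd4.hasDerivWithinAt
  -- pointwise identification of the transformed integrand
  set K : ℝ := C⁻¹ * (2 * (Real.sqrt lam * Real.sqrt θ)) with hK
  set h : ℝ → ℝ := fun y => K * (S y / r y) * f0 y with hh
  have hKpos : 0 < K := by
    have := Real.sqrt_pos.mpr hlam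
    have := Real.sqrt_pos.mpr hθ
    have := inv_pos.mpr hC0
    simp only [hK]; positivity
  have hptwise2 : ∀ y : ℝ, |2 * φ y / r y| • fInt (φ y) = h y := by
    intro y
    have hφy := hφ_pos y
    have hry := hr_pos y
    have hSy := hS_pos y
    have habs : |2 * φ y / r y| = 2 * φ y / r y := abs_of_pos (by positivity)
    -- the argument of g
    have harg : lam * (φ y - θ) ^ 2 / (θ ^ 2 * φ y) = lam * y ^ 2 / θ := by
      have hk := hkey y
      have h1 : φ y - θ = θ * (y * S y) := by
        simp only [hφ]; linear_combination θ * hk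
      simp only [hφ] at h1 ⊢
      rw [h1]
      field_simp
    -- the sqrt part
    have hsφ : Real.sqrt (φ y) = Real.sqrt θ * S y := by
      simp only [hφ]
      rw [Real.sqrt_mul hθ.le, Real.sqrt_sq hSy.le]
    have hsq3 : Real.sqrt (lam / φ y ^ 3) = Real.sqrt lam / (φ y * Real.sqrt (φ y)) := by
      rw [Real.sqrt_div hlam.le]
      congr 1
      have : φ y ^ 3 = φ y ^ 2 * φ y := by ring
      rw [this, Real.sqrt_mul (sq_nonneg _), Real.sqrt_sq hφy.le]
    have hsφ_pos : 0 < Real.sqrt (φ y) := Real.sqrt_pos.mpr hφy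
    have hφsq : Real.sqrt (φ y) * Real.sqrt (φ y) = φ y := Real.mul_self_sqrt hφy.le
    rw [smul_eq_mul, habs, hfInt]
    simp only [harg, hsq3, hh, hK, hf0]
    rw [hsφ]
    have hθs_pos : 0 < Real.sqrt θ := Real.sqrt_pos.mpr hθ
    have hsθsq : Real.sqrt θ * Real.sqrt θ = θ := Real.mul_self_sqrt hθ.le
    have hφeq : φ y = Real.sqrt θ * Real.sqrt θ * S y ^ 2 := by
      simp only [hφ]; rw [hsθsq]
    rw [hφeq]
    field_simp
  -- integrability of h
  have hmeas_f0 : Measurable f0 := by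
    apply hg.comp
    exact (measurable_id.pow_const 2 |>.const_mul lam).div_const θ
  have hcont_r : Continuous r := by
    simp only [hr]
    exact Real.continuous_sqrt.comp ((continuous_pow 2).add continuous_const)
  have hcont_S : Continuous S := by
    simp only [hS]
    exact (continuous_id.add hcont_r).div_const 2
  have hmeas_h : Measurable h := by
    simp only [hh]
    exact ((measurable_const.mul ((hcont_S.measurable).div hcont_r.measurable))).mul hmeas_f0
  have hbound : ∀ y : ℝ, ‖h y‖ ≤ K * f0 y := by
    intro y
    have hSy := hS_pos y
    have hry := hr_pos y
    have hSr : S y ≤ r y := by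
      have := hr_gt y
      have := le_abs_self y
      have h2s := h2S y
      nlinarith
    have hfrac : S y / r y ≤ 1 := (div_le_one hry).mpr hSr
    have hnn : 0 ≤ h y := by
      simp only [hh]
      have : 0 ≤ f0 y := hg0 _
      positivity
    rw [Real.norm_eq_abs, abs_of_nonneg hnn]
    simp only [hh]
    have hf0nn : 0 ≤ f0 y := hg0 _
    calc K * (S y / r y) * f0 y ≤ K * 1 * f0 y := by
          apply mul_le_mul_of_nonneg_right _ hf0nn
          exact mul_le_mul_of_nonneg_left hfrac hKpos.le
      _ = K * f0 y := by ring
  have hint_h : Integrable h := by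
    refine Integrable.mono' (hf0_int.const_mul K) hmeas_h.aestronglyMeasurable ?_
    exact Filter.Eventually.of_forall hbound
  -- integrability of fInt
  have hiff2 := integrableOn_image_iff_integrableOn_abs_deriv_smul
      MeasurableSet.univ hφderiv hφinj fInt
  rw [hφsurj] at hiff2
  have hint_fInt : IntegrableOn fInt (Set.Ioi 0) := by
    rw [hiff2]
    rw [integrableOn_univ]
    exact hint_h.congr (Filter.Eventually.of_forall fun y => (hptwise2 y).symm)
  refine ⟨hint_fInt, ?_⟩
  -- compute the integral
  have hstep : ∫ x in Set.Ioi (0:ℝ), fInt x = ∫ y, h y := by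
    rw [← hφsurj,
      integral_image_eq_integral_abs_deriv_smul MeasurableSet.univ hφderiv hφinj fInt]
    rw [setIntegral_univ]
    exact integral_congr_ae (Filter.Eventually.of_forall hptwise2)
  -- symmetry: h y + h (-y) = K * f0 y
  have hr_even : ∀ y, r (-y) = r y := by intro y; simp only [hr]; ring_nf
  have hsum : ∀ y, h y + h (-y) = K * f0 y := by
    intro y
    have h1 := h2S y
    have h2 := h2S (-y)
    rw [hr_even] at h2
    have hry := hr_pos y
    have hf0e : f0 (-y) = f0 y := by simp only [hf0]; ring_nf
    simp only [hh, hf0e, hr_even]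
    have h9 : S y + S (-y) = r y := by linarith
    have h10 : S y / r y + S (-y) / r y = 1 := by rw [← add_div, h9, div_self hry.ne']
    linear_combination (K * f0 y) * h10
  have hemb : MeasurableEmbedding (fun x : ℝ => -x) := (Homeomorph.neg ℝ).measurableEmbedding
  have hmp : MeasurePreserving (fun x : ℝ => -x) (volume : Measure ℝ) volume :=
    Measure.measurePreserving_neg _
  have hint_hneg : Integrable (fun y => h (-y)) :=
    (hmp.integrable_comp_emb hemb).mpr hint_h
  have hint_neg_eq : ∫ y, h (-y) = ∫ y, h y := hmp.integral_comp hemb h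
  have hHval : ∫ y, h y = K / 2 * ∫ y, f0 y := by
    have hadd : ∫ y, (h y + h (-y)) = (∫ y, h y) + ∫ y, h (-y) :=
      integral_add hint_h hint_hneg
    have h1 : ∫ y, (h y + h (-y)) = ∫ y, K * f0 y := by
      exact integral_congr_ae (Filter.Eventually.of_forall hsum)
    rw [hadd, hint_neg_eq, integral_const_mul] at h1
    linarith
  rw [hstep, hHval, hf0_integral, hf0_Ioi]
  -- final numeric computation
  have hsl : Real.sqrt (lam / θ) = Real.sqrt lam / Real.sqrt θ := Real.sqrt_div hlam.le θ
  have hsqlam : 0 < Real.sqrt lam := Real.sqrt_pos.mpr hlam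
  have hsθ : 0 < Real.sqrt θ := Real.sqrt_pos.mpr hθ
  have hθval : Real.sqrt θ * Real.sqrt θ = θ := Real.mul_self_sqrt hθ.le
  rw [hK, hc1, hsl]
  field_simp
  ring_nf
  rw [Real.sq_sqrt hθ.le]
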